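/- Let A and B be n×n real symmetric positive definite matrices and X an n×n real matrix. If the operator norm satisfies ‖X‖ < 1/√(‖A^{-1}‖ ‖B^{-1}‖), then the 2n×2n block matrix [[A, X],[Xᵀ, B]] is positive definite. -/

import Mathlib

open Matrix

/-- The operator (spectral) norm of a real matrix, induced by the Euclidean norm. -/
noncomputable def opNorm {n : ℕ} (A : Matrix (Fin n) (Fin n) ℝ) : ℝ :=
  ‖Matrix.toEuclideanCLM (𝕜 := ℝ) (n := Fin n) A‖

namespace BlockAux

variable {n : ℕ}

noncomputable abbrev eq (v : Fin n → ℝ) : EuclideanSpace ℝ (Fin n) :=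
  (WithLp.equiv 2 (Fin n → ℝ)).symm v

lemma dot_eq_inner (v w : Fin n → ℝ) :
    v ⬝ᵥ w = inner ℝ (eq v) (eq w) := by
  simp [PiLp.inner_apply, RCLike.inner_apply, dotProduct, mul_comm]

lemma clm_apply (M : Matrix (Fin n) (Fin n) ℝ) (v : Fin n → ℝ) :
    Matrix.toEuclideanCLM (𝕜 := ℝ) M (eq v) = eq (M *ᵥ v) := by
  rfl

lemma opNorm_nonneg (M : Matrix (Fin n) (Fin n) ℝ) : 0 ≤ opNorm M :=
  norm_nonneg _

lemma dot_self_eq_sq (v : Fin n → ℝ) : v ⬝ᵥ v = ‖eq v‖ ^ 2 := by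
  rw [dot_eq_inner, real_inner_self_eq_norm_sq]

lemma mulVec_dot_le (M : Matrix (Fin n) (Fin n) ℝ) (v : Fin n → ℝ) :
    (M *ᵥ v) ⬝ᵥ (M *ᵥ v) ≤ opNorm M ^ 2 * (v ⬝ᵥ v) := by
  rw [dot_self_eq_sq, dot_self_eq_sq, ← clm_apply]
  have h := (Matrix.toEuclideanCLM (𝕜 := ℝ) M).le_opNorm (eq v)
  calc ‖Matrix.toEuclideanCLM (𝕜 := ℝ) M (eq v)‖ ^ 2
      ≤ (opNorm M * ‖eq v‖) ^ 2 := by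
        apply pow_le_pow_left₀ (norm_nonneg _) h
    _ = opNorm M ^ 2 * ‖eq v‖ ^ 2 := by ring

lemma dot_mulVec_le (M : Matrix (Fin n) (Fin n) ℝ) (v : Fin n → ℝ) :
    v ⬝ᵥ (M *ᵥ v) ≤ opNorm M * (v ⬝ᵥ v) := by
  rw [dot_eq_inner, ← clm_apply, dot_self_eq_sq]
  calc inner ℝ (eq v) (Matrix.toEuclideanCLM (𝕜 := ℝ) M (eq v))
      ≤ ‖eq v‖ * ‖Matrix.toEuclideanCLM (𝕜 := ℝ) M (eq v)‖ := real_inner_le_norm _ _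
    _ ≤ ‖eq v‖ * (opNorm M * ‖eq v‖) := by
        apply mul_le_mul_of_nonneg_left ((Matrix.toEuclideanCLM (𝕜 := ℝ) M).le_opNorm _)
          (norm_nonneg _)
    _ = opNorm M * ‖eq v‖ ^ 2 := by ring

lemma opNorm_mul_opNorm_star_eq (S : Matrix (Fin n) (Fin n) ℝ) (hS : S.IsHermitian) :
    opNorm S * opNorm S = opNorm (S * S) := by
  unfold opNorm
  rw [← CStarRing.norm_star_mul_self (x := Matrix.toEuclideanCLM (𝕜 := ℝ) S)]
  congr 1
  rw [← map_star, ← _root_.map_mul]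
  congr 1
  rw [Matrix.star_eq_conjTranspose, hS.eq]

open scoped MatrixOrder in
/-- Lower bound: `v ⬝ᵥ v ≤ ‖B⁻¹‖ * (v ⬝ᵥ B v)` for `B` positive definite. -/
lemma posdef_lower {B : Matrix (Fin n) (Fin n) ℝ} (hB : B.PosDef) (v : Fin n → ℝ) :
    v ⬝ᵥ v ≤ opNorm B⁻¹ * (v ⬝ᵥ B *ᵥ v) := by
  set S := CFC.sqrt B with hSdef
  have hSS : S * S = B := CFC.sqrt_mul_sqrt_self B (Matrix.nonneg_iff_posSemidef.2 hB.posSemidef)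
  have hSh : S.IsHermitian := (CFC.sqrt_nonneg B).isSelfAdjoint
  have hdet : S.det ≠ 0 := by
    intro h
    have : B.det = 0 := by rw [← hSS, det_mul, h, mul_zero]
    exact hB.det_pos.ne' this
  have hSunit : IsUnit S := (isUnit_iff_isUnit_det S).2 hdet.isUnit
  have hST : Sᵀ = S := by
    have h := hSh.eq
    ext i j
    have := congrFun (congrFun h i) j
    simpa [Matrix.conjTranspose_apply] using this
  -- key rewriting: v ⬝ᵥ B *ᵥ v = (S *ᵥ v) ⬝ᵥ (S *ᵥ v)
  have key : v ⬝ᵥ B *ᵥ v = (S *ᵥ v) ⬝ᵥ (S *ᵥ v) := by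
    rw [← hSS, ← Matrix.mulVec_mulVec, Matrix.dotProduct_mulVec, ← Matrix.mulVec_transpose, hST]
  have hv : v = S⁻¹ *ᵥ (S *ᵥ v) := by
    rw [Matrix.mulVec_mulVec, Matrix.nonsing_inv_mul S hdet.isUnit, Matrix.one_mulVec]
  have hbound : v ⬝ᵥ v ≤ opNorm S⁻¹ ^ 2 * ((S *ᵥ v) ⬝ᵥ (S *ᵥ v)) := by
    conv_lhs => rw [hv]
    exact mulVec_dot_le S⁻¹ (S *ᵥ v)
  have hnorm : opNorm S⁻¹ ^ 2 = opNorm B⁻¹ := by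
    have hSinvh : S⁻¹.IsHermitian := hSh.inv
    rw [pow_two, opNorm_mul_opNorm_star_eq S⁻¹ hSinvh]
    congr 1
    rw [← Matrix.mul_inv_rev, hSS]
  rw [key, ← hnorm]
  exact hbound

/-- Positive-definite version of the Schur complement criterion. -/
lemma posDef_fromBlocks₁₁ {m l : Type*} [Fintype m] [DecidableEq m] [Fintype l] [DecidableEq l]
    {A : Matrix m m ℝ} (B : Matrix m l ℝ) (D : Matrix l l ℝ) (hA : A.PosDef)
    (h : (D - Bᴴ * A⁻¹ * B).PosDef) : (Matrix.fromBlocks A B Bᴴ D).PosDef := by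
  letI := hA.isUnit.invertible
  rw [Matrix.posDef_iff_dotProduct_mulVec]
  refine ⟨(Matrix.IsHermitian.fromBlocks₁₁ B D hA.1).2 h.1, fun x hx => ?_⟩
  rw [Matrix.dotProduct_mulVec, ← Sum.elim_comp_inl_inr x,
    Matrix.schur_complement_eq₁₁ B D _ _ hA.1]
  by_cases h2 : x ∘ Sum.inr = 0
  · have h1 : x ∘ Sum.inl ≠ 0 := by
      intro h1
      apply hx
      funext i
      rcases i with i | i
      · exact congrFun h1 i
      · exact congrFun h2 i
    rw [h2]
    simp only [Matrix.mulVec_zero, add_zero, Matrix.vecMul_zero, dotProduct_zero]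
    have := (Matrix.posDef_iff_dotProduct_mulVec.mp hA).2 h1
    rw [Matrix.dotProduct_mulVec] at this
    linarith
  · have hpos := (Matrix.posDef_iff_dotProduct_mulVec.mp h).2 h2
    rw [Matrix.dotProduct_mulVec] at hpos
    have hnonneg := (Matrix.posSemidef_iff_dotProduct_mulVec.mp hA.posSemidef).2 (x ∘ Sum.inl + (A⁻¹ * B) *ᵥ (x ∘ Sum.inr))
    rw [Matrix.dotProduct_mulVec] at hnonneg
    linarith

set_option synthInstance.maxHeartbeats 800000 in
lemma opNorm_pos_of_ne_zero {M : Matrix (Fin n) (Fin n) ℝ} (hM : M ≠ 0) : 0 < opNorm M := by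
  rw [opNorm, norm_pos_iff]
  intro h
  apply hM
  have : Matrix.toEuclideanCLM (𝕜 := ℝ) M = Matrix.toEuclideanCLM (𝕜 := ℝ) 0 := by
    rw [h, map_zero]
  exact (Matrix.toEuclideanCLM (𝕜 := ℝ)).injective this

end BlockAux

theorem blockMatrix_posDef_of_norm_lt (n : ℕ) (A B X : Matrix (Fin n) (Fin n) ℝ)
    (hA : A.PosDef) (hB : B.PosDef)
    (hX : opNorm X < 1 / Real.sqrt (opNorm A⁻¹ * opNorm B⁻¹)) :
    (Matrix.fromBlocks A X Xᵀ B).PosDef := by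
  rcases Nat.eq_zero_or_pos n with hn | hn
  · subst hn
    exfalso
    have h0 : ∀ M : Matrix (Fin 0) (Fin 0) ℝ, opNorm M = 0 := by
      intro M
      rw [opNorm]
      have : Matrix.toEuclideanCLM (𝕜 := ℝ) M = 0 := Subsingleton.elim _ _
      rw [this, norm_zero]
    rw [h0, h0, h0, mul_zero, Real.sqrt_zero, div_zero] at hX
    exact absurd hX (lt_irrefl 0)
  -- main case
  have hXT : Xᵀ = Xᴴ := by
    ext i j
    simp [Matrix.conjTranspose_apply]
  rw [hXT]
  have hone : (1 : Matrix (Fin n) (Fin n) ℝ) ≠ 0 := by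
    intro h
    have i0 : Fin n := ⟨0, hn⟩
    have := congrFun (congrFun h i0) i0
    simp at this
  have hAinv_ne : A⁻¹ ≠ 0 := by
    intro h
    apply hone
    rw [← Matrix.nonsing_inv_mul A hA.det_pos.ne'.isUnit, h, Matrix.zero_mul]
  have hBinv_ne : B⁻¹ ≠ 0 := by
    intro h
    apply hone
    rw [← Matrix.nonsing_inv_mul B hB.det_pos.ne'.isUnit, h, Matrix.zero_mul]
  have ha : 0 < opNorm A⁻¹ := BlockAux.opNorm_pos_of_ne_zero hAinv_ne
  have hb : 0 < opNorm B⁻¹ := BlockAux.opNorm_pos_of_ne_zero hBinv_ne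
  have hab : 0 < opNorm A⁻¹ * opNorm B⁻¹ := mul_pos ha hb
  have hXsq : opNorm X ^ 2 < 1 / (opNorm A⁻¹ * opNorm B⁻¹) := by
    have hXnn : 0 ≤ opNorm X := BlockAux.opNorm_nonneg X
    have h1 : opNorm X ^ 2 < (1 / Real.sqrt (opNorm A⁻¹ * opNorm B⁻¹)) ^ 2 := by
      apply pow_lt_pow_left₀ hX hXnn
      norm_num
    calc opNorm X ^ 2 < (1 / Real.sqrt (opNorm A⁻¹ * opNorm B⁻¹)) ^ 2 := h1
      _ = 1 / (opNorm A⁻¹ * opNorm B⁻¹) := by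
          rw [div_pow, one_pow, Real.sq_sqrt hab.le]
  apply BlockAux.posDef_fromBlocks₁₁ _ _ hA
  rw [Matrix.posDef_iff_dotProduct_mulVec]
  constructor
  · apply Matrix.IsHermitian.sub hB.1
    exact Matrix.isHermitian_conjTranspose_mul_mul X hA.1.inv
  · intro v hv
    have hst : star v = v := by funext i; exact star_trivial _
    rw [hst, Matrix.sub_mulVec, dotProduct_sub]
    have hform : v ⬝ᵥ (Xᴴ * A⁻¹ * X) *ᵥ v = (X *ᵥ v) ⬝ᵥ (A⁻¹ *ᵥ (X *ᵥ v)) := by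
      rw [← hXT, Matrix.mul_assoc, ← Matrix.mulVec_mulVec, Matrix.dotProduct_mulVec,
        ← Matrix.mulVec_transpose, Matrix.transpose_transpose, Matrix.mulVec_mulVec]
    rw [hform]
    -- bounds
    have hvv : 0 < v ⬝ᵥ v := by
      rw [BlockAux.dot_self_eq_sq]
      have : BlockAux.eq v ≠ 0 := fun h => hv (congrArg WithLp.ofLp h)
      exact pow_pos (norm_pos_iff.2 this) 2
    have h1 : (X *ᵥ v) ⬝ᵥ (A⁻¹ *ᵥ (X *ᵥ v)) ≤ opNorm A⁻¹ * ((X *ᵥ v) ⬝ᵥ (X *ᵥ v)) :=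
      BlockAux.dot_mulVec_le A⁻¹ (X *ᵥ v)
    have h2 : (X *ᵥ v) ⬝ᵥ (X *ᵥ v) ≤ opNorm X ^ 2 * (v ⬝ᵥ v) := BlockAux.mulVec_dot_le X v
    have h3 : v ⬝ᵥ v ≤ opNorm B⁻¹ * (v ⬝ᵥ B *ᵥ v) := BlockAux.posdef_lower hB v
    have hXvnn : 0 ≤ (X *ᵥ v) ⬝ᵥ (X *ᵥ v) := by
      rw [BlockAux.dot_self_eq_sq]; positivity
    -- combine
    have hkey : opNorm A⁻¹ * (opNorm X ^ 2 * (v ⬝ᵥ v)) < (v ⬝ᵥ v) / opNorm B⁻¹ := by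
      rw [div_eq_mul_inv]
      have : opNorm A⁻¹ * opNorm X ^ 2 < (opNorm B⁻¹)⁻¹ := by
        rw [one_div] at hXsq
        calc opNorm A⁻¹ * opNorm X ^ 2 < opNorm A⁻¹ * (opNorm A⁻¹ * opNorm B⁻¹)⁻¹ := by
              exact (mul_lt_mul_iff_right₀ ha).2 hXsq
          _ = (opNorm B⁻¹)⁻¹ := by
              rw [mul_inv, ← mul_assoc, mul_inv_cancel₀ ha.ne', one_mul]
      calc opNorm A⁻¹ * (opNorm X ^ 2 * (v ⬝ᵥ v)) = (opNorm A⁻¹ * opNorm X ^ 2) * (v ⬝ᵥ v) := by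
            ring
        _ < (opNorm B⁻¹)⁻¹ * (v ⬝ᵥ v) := by
            exact mul_lt_mul_of_pos_right this hvv
        _ = (v ⬝ᵥ v) * (opNorm B⁻¹)⁻¹ := by ring
    have h4 : (v ⬝ᵥ v) / opNorm B⁻¹ ≤ v ⬝ᵥ B *ᵥ v := by
      rw [div_le_iff₀ hb]
      linarith [h3]
    have h5 : (X *ᵥ v) ⬝ᵥ (A⁻¹ *ᵥ (X *ᵥ v)) < (v ⬝ᵥ v) / opNorm B⁻¹ := by
      calc (X *ᵥ v) ⬝ᵥ (A⁻¹ *ᵥ (X *ᵥ v)) ≤ opNorm A⁻¹ * ((X *ᵥ v) ⬝ᵥ (X *ᵥ v)) := h1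
        _ ≤ opNorm A⁻¹ * (opNorm X ^ 2 * (v ⬝ᵥ v)) := by
            apply mul_le_mul_of_nonneg_left h2 ha.le
        _ < (v ⬝ᵥ v) / opNorm B⁻¹ := hkey
    linarith
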